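/- Fix t > 0 and v = v_t(u) defined implicitly by u² = (1/v)(1+v)(t−v−v²), v > 0. Then d/du [u·v/(1+v)] = v(−t + 2v(1+v)²)/((1+v)(t + 2v²(1+v))). -/

import Mathlib

open Real

/-- Cauchy case: with `v = v_t(u)` defined implicitly by `u² = (1/v)(1+v)(t−v−v²)` and
differentiable with `2u = −(t/v² + 2(1+v)) v'`, one has
`d/du [u v/(1+v)] = v(−t + 2v(1+v)²)/((1+v)(t + 2v²(1+v)))`. -/
theorem cauchy_uv_deriv (t : ℝ) (ht : 0 < t) (v : ℝ → ℝ)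
    (hpos : ∀ u, 0 < v u)
    (himp : ∀ u : ℝ, u ^ 2 = (1 / v u) * (1 + v u) * (t - v u - (v u) ^ 2))
    (hv' : ∀ u : ℝ, HasDerivAt v (-(2 * u) / (t / (v u) ^ 2 + 2 * (1 + v u))) u) :
    ∀ u : ℝ, HasDerivAt (fun u => u * v u / (1 + v u))
      (v u * (-t + 2 * v u * (1 + v u) ^ 2) / ((1 + v u) * (t + 2 * (v u) ^ 2 * (1 + v u)))) u := by
  intro u
  have hw := hpos u
  have hw0 : v u ≠ 0 := ne_of_gt hw
  have h1 : (0:ℝ) < 1 + v u := by linarith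
  have h10 : (1 + v u) ≠ 0 := ne_of_gt h1
  have hD : (0:ℝ) < t / (v u)^2 + 2*(1+v u) := by positivity
  have hD0 : t / (v u)^2 + 2*(1+v u) ≠ 0 := ne_of_gt hD
  have hE : (0:ℝ) < t + 2*(v u)^2*(1+v u) := by positivity
  have hE0 : t + 2*(v u)^2*(1+v u) ≠ 0 := ne_of_gt hE
  have h := hv' u
  have hnum : HasDerivAt (fun u => u * v u)
      (1 * v u + u * (-(2*u)/(t/(v u)^2 + 2*(1+v u)))) u := (hasDerivAt_id u).mul h
  have hden : HasDerivAt (fun u => 1 + v u) (-(2*u)/(t/(v u)^2+2*(1+v u))) u := h.const_add 1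
  have hdiv := hnum.div hden h10
  refine hdiv.congr_deriv ?_
  symm
  have hu := himp u
  field_simp at hu ⊢
  linear_combination 2 * hu
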